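/- arXiv:1703.06865 — 5 statements merged into one kernel-verified Lean document; each statement's English description precedes it below -/
import Mathlib

section
/- For any positive integer n, the sum over primes p in [Y,Z) dividing n (with p^k exactly dividing n, k≥1) of w(n/p^k), where w(m) = 1/(#{primes p in [Y,Z) dividing m} + 1), equals 1 if n has at least one prime factor in [Y,Z), and equals 0 otherwise. -/
open Finset

/-- Ramaré's identity: for a positive integer `n`, with
`w m = 1 / (#{primes p ∈ [Y,Z) : p ∣ m} + 1)`, the sum over primes `p ∈ [Y,Z)` dividing `n`
(with `p ^ k` exactly dividing `n`) of `w (n / p ^ k)` equals `1` if `n` has a prime factor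
in `[Y,Z)` and `0` otherwise. -/
theorem ramare_identity (Y Z : ℝ) (hY : 2 ≤ Y) (hYZ : Y < Z) (n : ℕ) (hn : 0 < n)
    (w : ℕ → ℝ)
    (hw : ∀ m : ℕ, w m =
      1 / (((m.primeFactors.filter (fun p : ℕ => Y ≤ (p : ℝ) ∧ (p : ℝ) < Z)).card : ℝ) + 1)) :
    ∑ p ∈ n.primeFactors.filter (fun p : ℕ => Y ≤ (p : ℝ) ∧ (p : ℝ) < Z),
        w (n / p ^ (n.factorization p)) =
      if (n.primeFactors.filter (fun p : ℕ => Y ≤ (p : ℝ) ∧ (p : ℝ) < Z)).Nonempty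
      then 1 else 0 := by
  set S := n.primeFactors.filter (fun p : ℕ => Y ≤ (p : ℝ) ∧ (p : ℝ) < Z) with hS
  have hterm : ∀ p ∈ S, w (n / p ^ (n.factorization p)) = 1 / (S.card : ℝ) := by
    intro p hp
    have hfac : (n / p ^ (n.factorization p)).primeFactors = n.primeFactors.erase p := by
      rw [← Nat.support_factorization, Nat.factorization_ordCompl, Finsupp.support_erase,
        Nat.support_factorization]
    have hcard :
        ((n / p ^ (n.factorization p)).primeFactors.filter
          (fun p : ℕ => Y ≤ (p : ℝ) ∧ (p : ℝ) < Z)) = S.erase p := by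
      rw [hfac, Finset.filter_erase, hS]
    rw [hw, hcard, Finset.card_erase_of_mem hp]
    have h1 : 1 ≤ S.card := Finset.card_pos.mpr ⟨p, hp⟩
    congr 1
    push_cast [Nat.cast_sub h1]
    ring
  rw [Finset.sum_congr rfl hterm, Finset.sum_const, nsmul_eq_mul]
  rcases S.eq_empty_or_nonempty with h | h
  · simp [h]
  · rw [if_pos h]
    have : (S.card : ℝ) ≠ 0 := by
      exact_mod_cast (Finset.card_pos.mpr h).ne'
    field_simp
end

section
/- Let f, h be arithmetic functions with f multiplicative, let ψ be a Dirichlet character mod r inducing the character χ mod q (so r ∣ q), and let h be the multiplicative function supported only on prime powers p^k with p ∣ q and p ∤ r, defined so that the Dirichlet convolution h * (f·\overline{ψ}) vanishes at every prime power p^k with p ∣ q, p ∤ r, k ≥ 1. Then h * (f·\overline{ψ}) = f·\overline{χ}, and consequently S_f(x,χ) = ∑_{m ≤ x} h(m) S_f(x/m, ψ) for all x ≥ 1. -/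
open Finset

/-- If `ψ mod r` induces `χ mod q` (so `r ∣ q`), and `h` is the multiplicative function
supported only on prime powers `p^k` with `p ∣ q`, `p ∤ r`, chosen so that the Dirichlet
convolution `h * (f·conj ψ)` vanishes at all such prime powers, then
`h * (f·conj ψ) = f·conj χ`, and consequently
`S_f(x,χ) = ∑_{m ≤ x} h(m) S_f(x/m, ψ)` for all `x ≥ 1`. -/
theorem induced_char_convolution
    (f h : ℕ → ℂ)
    (hf1 : f 1 = 1) (hfm : ∀ m n : ℕ, Nat.Coprime m n → f (m * n) = f m * f n)
    (q r : ℕ) [NeZero q] [NeZero r] (hrq : r ∣ q)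
    (ψ : DirichletCharacter ℂ r) (χ : DirichletCharacter ℂ q)
    (hχ : χ = DirichletCharacter.changeLevel hrq ψ)
    (hh1 : h 1 = 1) (hhm : ∀ m n : ℕ, Nat.Coprime m n → h (m * n) = h m * h n)
    (hsupp : ∀ n : ℕ, n ≠ 1 →
      (¬ ∃ p k : ℕ, p.Prime ∧ 1 ≤ k ∧ p ∣ q ∧ ¬ p ∣ r ∧ n = p ^ k) → h n = 0)
    (hvanish : ∀ p k : ℕ, p.Prime → p ∣ q → ¬ p ∣ r → 1 ≤ k →
      ∑ d ∈ (p ^ k).divisors,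
        h d * (f (p ^ k / d) * (starRingEnd ℂ) (ψ ((p ^ k / d : ℕ) : ZMod r))) = 0) :
    (∀ n : ℕ, 0 < n →
      ∑ d ∈ n.divisors,
        h d * (f (n / d) * (starRingEnd ℂ) (ψ ((n / d : ℕ) : ZMod r))) =
          f n * (starRingEnd ℂ) (χ (n : ZMod q))) ∧
    ∀ x : ℝ, 1 ≤ x →
      ∑ n ∈ Finset.Icc 1 ⌊x⌋₊, f n * (starRingEnd ℂ) (χ (n : ZMod q)) =
        ∑ m ∈ Finset.Icc 1 ⌊x⌋₊, h m *
          ∑ n ∈ Finset.Icc 1 ⌊x / (m : ℝ)⌋₊, f n * (starRingEnd ℂ) (ψ (n : ZMod r)) := by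
  -- χ at naturals
  have hχval : ∀ n : ℕ, Nat.Coprime n q → χ ((n : ℕ) : ZMod q) = ψ ((n : ℕ) : ZMod r) := by
    intro n hn
    have hu : IsUnit ((n : ℕ) : ZMod q) := (ZMod.isUnit_iff_coprime n q).mpr hn
    obtain ⟨u, hu⟩ := hu
    rw [hχ, ← hu, DirichletCharacter.changeLevel_eq_cast_of_dvd ψ hrq u, hu,
      ZMod.cast_natCast hrq]
  have hχ0 : ∀ n : ℕ, ¬ Nat.Coprime n q → χ ((n : ℕ) : ZMod q) = 0 := by
    intro n hn
    exact χ.map_nonunit (fun hu => hn ((ZMod.isUnit_iff_coprime n q).mp hu))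
  have hψ0 : ∀ n : ℕ, ¬ Nat.Coprime n r → ψ ((n : ℕ) : ZMod r) = 0 := by
    intro n hn
    exact ψ.map_nonunit (fun hu => hn ((ZMod.isUnit_iff_coprime n r).mp hu))
  have hnotcop : ∀ (p i m : ℕ), p.Prime → 1 ≤ i → p ∣ m → ¬ Nat.Coprime (p ^ i) m := by
    intro p i m hp hi hpm hc
    have hpd : p ∣ Nat.gcd (p ^ i) m := Nat.dvd_gcd (dvd_pow_self p (Nat.pos_iff_ne_zero.mp hi)) hpm
    rw [Nat.Coprime] at hc
    rw [hc] at hpd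
    have := Nat.eq_one_of_dvd_one hpd
    have := hp.one_lt
    omega
  -- arithmetic functions
  set g : ℕ → ℂ := fun n => f n * (starRingEnd ℂ) (ψ (n : ZMod r)) with hg
  set R : ℕ → ℂ := fun n => f n * (starRingEnd ℂ) (χ (n : ZMod q)) with hR
  have hgm : ∀ m n : ℕ, Nat.Coprime m n → g (m * n) = g m * g n := by
    intro m n hmn
    simp only [hg, hfm m n hmn]
    push_cast
    rw [map_mul ψ, map_mul]
    ring
  have hRm : ∀ m n : ℕ, Nat.Coprime m n → R (m * n) = R m * R n := by
    intro m n hmn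
    simp only [hR, hfm m n hmn]
    push_cast
    rw [map_mul χ, map_mul]
    ring
  have hg1 : g 1 = 1 := by simp [hg, hf1]
  have hR1 : R 1 = 1 := by simp [hR, hf1]
  set H : ArithmeticFunction ℂ := ⟨fun n => if n = 0 then 0 else h n, if_pos rfl⟩ with hHdef
  set G : ArithmeticFunction ℂ := ⟨fun n => if n = 0 then 0 else g n, if_pos rfl⟩ with hGdef
  set Rf : ArithmeticFunction ℂ := ⟨fun n => if n = 0 then 0 else R n, if_pos rfl⟩ with hRfdef
  have happ : ∀ n : ℕ, n ≠ 0 → H n = h n := fun n hn => if_neg hn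
  have gapp : ∀ n : ℕ, n ≠ 0 → G n = g n := fun n hn => if_neg hn
  have Rapp : ∀ n : ℕ, n ≠ 0 → Rf n = R n := fun n hn => if_neg hn
  have mk_mult : ∀ (u : ℕ → ℂ) (hu1 : u 1 = 1)
      (hum : ∀ m n : ℕ, Nat.Coprime m n → u (m * n) = u m * u n),
      ArithmeticFunction.IsMultiplicative
        (⟨fun n => if n = 0 then 0 else u n, if_pos rfl⟩ : ArithmeticFunction ℂ) := by
    intro u hu1 hum
    refine ArithmeticFunction.IsMultiplicative.iff_ne_zero.mpr ?_
    refine ⟨by simpa using hu1, ?_⟩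
    intro m n hm hn hmn
    have : m * n ≠ 0 := Nat.mul_ne_zero hm hn
    simp only [ArithmeticFunction.coe_mk, if_neg hm, if_neg hn, if_neg this]
    exact hum m n hmn
  have hHmult : ArithmeticFunction.IsMultiplicative H := mk_mult h hh1 hhm
  have hGmult : ArithmeticFunction.IsMultiplicative G := mk_mult g hg1 hgm
  have hRmult : ArithmeticFunction.IsMultiplicative Rf := mk_mult R hR1 hRm
  -- the main convolution identity as arithmetic functions
  have key : H * G = Rf := by
    rw [ArithmeticFunction.IsMultiplicative.eq_iff_eq_on_prime_powers _ (hHmult.mul hGmult) _ hRmult]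
    intro p i hp
    rcases Nat.eq_zero_or_pos i with rfl | hi
    · simp [ArithmeticFunction.IsMultiplicative.map_one (hHmult.mul hGmult),
        ArithmeticFunction.IsMultiplicative.map_one hRmult]
    have hpk0 : p ^ i ≠ 0 := pow_ne_zero _ hp.pos.ne'
    -- rewrite the convolution as a divisor sum
    have hconv : (H * G) (p ^ i) = ∑ d ∈ (p ^ i).divisors, H d * G (p ^ i / d) := by
      rw [ArithmeticFunction.mul_apply, Nat.sum_divisorsAntidiagonal (fun a b => H a * G b)]
    -- helper: h vanishes on nontrivial divisors of p^i unless p ∣ q ∧ ¬ p ∣ r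
    by_cases hcase : p ∣ q ∧ ¬ p ∣ r
    · -- vanishing case
      have := hvanish p i hp hcase.1 hcase.2 hi
      rw [hconv]
      have : ∑ d ∈ (p ^ i).divisors, H d * G (p ^ i / d)
          = ∑ d ∈ (p ^ i).divisors,
            h d * (f (p ^ i / d) * (starRingEnd ℂ) (ψ ((p ^ i / d : ℕ) : ZMod r))) := by
        refine Finset.sum_congr rfl fun d hd => ?_
        have hd' := Nat.mem_divisors.mp hd
        have hdne : d ≠ 0 := fun h0 => hd'.2 (by simpa [h0] using hd'.1)
        have hq : p ^ i / d ≠ 0 :=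
          (Nat.div_pos (Nat.le_of_dvd (Nat.pos_of_ne_zero hpk0) hd'.1)
            (Nat.pos_of_ne_zero hdne)).ne'
        rw [happ d hdne, gapp _ hq]
      rw [this, hvanish p i hp hcase.1 hcase.2 hi, Rapp _ hpk0]
      have hnc : ¬ Nat.Coprime (p ^ i) q := hnotcop p i q hp hi hcase.1
      simp only [hR]
      rw [hχ0 _ hnc]
      simp
    · -- h vanishes on nontrivial divisors of p^i
      have hzero : ∀ d : ℕ, d ∣ p ^ i → d ≠ 1 → h d = 0 := by
        intro d hd hd1
        refine hsupp d hd1 ?_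
        rintro ⟨p', k', hp', hk', hpq', hpr', rfl⟩
        have hdvd : p' ∣ p := hp'.dvd_of_dvd_pow (dvd_trans (dvd_pow_self p' (Nat.pos_iff_ne_zero.mp hk')) hd)
        have : p' = p := (Nat.prime_dvd_prime_iff_eq hp' hp).mp hdvd
        subst this
        exact hcase ⟨hpq', hpr'⟩
      rw [hconv, Finset.sum_eq_single_of_mem 1 (Nat.one_mem_divisors.mpr hpk0)
        (fun d hd hd1 => by
          rw [happ d (Nat.ne_of_gt (Nat.pos_of_mem_divisors hd)),
            hzero d (Nat.mem_divisors.mp hd).1 hd1, zero_mul]),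
        happ 1 one_ne_zero, hh1, one_mul, Nat.div_one, gapp _ hpk0, Rapp _ hpk0]
      rw [not_and_or, not_not] at hcase
      rcases hcase with hpq | hpr
      · -- p ∤ q : χ(p^i)=ψ(p^i)
        have hcop : Nat.Coprime (p ^ i) q :=
          (Nat.Prime.coprime_iff_not_dvd hp).mpr hpq |>.pow_left _
        simp only [hg, hR]
        rw [hχval _ hcop]
      · -- p ∣ r : both sides zero
        have h1 : ¬ Nat.Coprime (p ^ i) r := hnotcop p i r hp hi hpr
        have h2 : ¬ Nat.Coprime (p ^ i) q := hnotcop p i q hp hi (hpr.trans hrq)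
        simp only [hg, hR]
        rw [hψ0 _ h1, hχ0 _ h2]
  -- derive part 1
  have part1 : ∀ n : ℕ, 0 < n →
      ∑ d ∈ n.divisors,
        h d * (f (n / d) * (starRingEnd ℂ) (ψ ((n / d : ℕ) : ZMod r))) =
          f n * (starRingEnd ℂ) (χ (n : ZMod q)) := by
    intro n hn
    have this : (H * G) n = Rf n := by rw [key]
    rw [ArithmeticFunction.mul_apply, Nat.sum_divisorsAntidiagonal (fun a b => H a * G b)] at this
    rw [Rapp _ hn.ne'] at this
    simp only [hR, hg] at this ⊢
    rw [← this]
    refine Finset.sum_congr rfl fun d hd => ?_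
    have hd' := Nat.mem_divisors.mp hd
    have hdne : d ≠ 0 := Nat.ne_of_gt (Nat.pos_of_mem_divisors hd)
    have hq : n / d ≠ 0 :=
      (Nat.div_pos (Nat.le_of_dvd hn hd'.1) (Nat.pos_of_ne_zero hdne)).ne'
    rw [happ d hdne, gapp _ hq]
  refine ⟨part1, ?_⟩
  -- part 2
  intro x hx
  set N := ⌊x⌋₊ with hN
  have hfloor : ∀ m : ℕ, ⌊x / (m : ℝ)⌋₊ = N / m := fun m => Nat.floor_div_natCast x m
  calc ∑ n ∈ Finset.Icc 1 N, f n * (starRingEnd ℂ) (χ (n : ZMod q))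
      = ∑ n ∈ Finset.Icc 1 N, ∑ d ∈ n.divisors, h d * g (n / d) := by
        refine Finset.sum_congr rfl fun n hn => ?_
        exact (part1 n (Finset.mem_Icc.mp hn).1).symm
    _ = ∑ n ∈ Finset.Icc 1 N, ∑ p ∈ n.divisorsAntidiagonal, h p.1 * g p.2 := by
        refine Finset.sum_congr rfl fun n hn => ?_
        rw [Nat.sum_divisorsAntidiagonal (fun a b => h a * g b)]
    _ = ∑ m ∈ Finset.Icc 1 N, ∑ k ∈ Finset.Icc 1 (N / m), h m * g k := by
        rw [Finset.sum_sigma', Finset.sum_sigma']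
        refine Finset.sum_nbij' (fun x => ⟨x.2.1, x.2.2⟩) (fun y => ⟨y.1 * y.2, (y.1, y.2)⟩)
          ?_ ?_ ?_ ?_ ?_
        · rintro ⟨n, a, b⟩ hmem
          simp only [Finset.mem_sigma, Finset.mem_Icc, Nat.mem_divisorsAntidiagonal] at hmem ⊢
          obtain ⟨⟨h1n, hnN⟩, hab, hn0⟩ := hmem
          subst hab
          have ha0 : 0 < a := Nat.pos_of_ne_zero (fun h0 => hn0 (by simp [h0]))
          have hb0 : 0 < b := Nat.pos_of_ne_zero (fun h0 => hn0 (by simp [h0]))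
          refine ⟨⟨ha0, le_trans (Nat.le_mul_of_pos_right a hb0) hnN⟩, hb0, ?_⟩
          rw [Nat.le_div_iff_mul_le ha0, mul_comm]
          exact hnN
        · rintro ⟨m, k⟩ hmem
          simp only [Finset.mem_sigma, Finset.mem_Icc, Nat.mem_divisorsAntidiagonal] at hmem ⊢
          obtain ⟨⟨h1m, hmN⟩, h1k, hkN⟩ := hmem
          have hmk : m * k ≤ N := by
            rw [mul_comm]
            exact (Nat.le_div_iff_mul_le (by omega)).mp hkN
          have hmk0 : 0 < m * k := Nat.mul_pos (by omega) (by omega)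
          exact ⟨⟨Nat.succ_le_of_lt hmk0, hmk⟩, trivial, hmk0.ne'⟩
        · rintro ⟨n, a, b⟩ hmem
          simp only [Finset.mem_sigma, Nat.mem_divisorsAntidiagonal] at hmem
          obtain ⟨_, hab, _⟩ := hmem
          simp [hab]
        · rintro ⟨m, k⟩ hmem; rfl
        · rintro ⟨n, a, b⟩ hmem; rfl
    _ = ∑ m ∈ Finset.Icc 1 N, h m * ∑ k ∈ Finset.Icc 1 (N / m), g k := by
        refine Finset.sum_congr rfl fun m hm => ?_
        rw [Finset.mul_sum]
    _ = ∑ m ∈ Finset.Icc 1 N, h m *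
          ∑ n ∈ Finset.Icc 1 ⌊x / (m : ℝ)⌋₊, f n * (starRingEnd ℂ) (ψ (n : ZMod r)) := by
        refine Finset.sum_congr rfl fun m hm => ?_
        rw [hfloor m]
end

section
/- Suppose f ∈ 𝒞, i.e., f is a multiplicative function whose Dirichlet series F(s) = ∑ f(n)n^{-s} satisfies −F'/F(s) = ∑ Λ_f(n) n^{-s} with |Λ_f(n)| ≤ Λ(n) for all n. Then |f(n)| ≤ 1 for all n ≥ 1. -/
open Finset ArithmeticFunction

/-- If `f` is a multiplicative function whose "von Mangoldt factorization" `Λ_f`,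
defined by `f(n) log n = ∑_{d ∣ n} Λ_f(d) f(n/d)`, satisfies `|Λ_f(n)| ≤ Λ(n)` for all `n`,
then `|f(n)| ≤ 1` for all `n ≥ 1`. -/
theorem abs_le_one_of_vonMangoldt_bound
    (f Λf : ℕ → ℂ)
    (hf1 : f 1 = 1) (hfm : ∀ m n : ℕ, Nat.Coprime m n → f (m * n) = f m * f n)
    (hconv : ∀ n : ℕ, 1 ≤ n →
      f n * (Real.log n : ℂ) = ∑ d ∈ n.divisors, Λf d * f (n / d))
    (hΛ : ∀ n : ℕ, ‖Λf n‖ ≤ ArithmeticFunction.vonMangoldt n) :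
    ∀ n : ℕ, 1 ≤ n → ‖f n‖ ≤ 1 := by
  intro n
  induction n using Nat.strong_induction_on with
  | _ n ih =>
    intro hn
    rcases eq_or_lt_of_le hn with h1 | h2
    · simp [← h1, hf1]
    · have hlog : (0:ℝ) < Real.log n := Real.log_pos (by exact_mod_cast h2)
      have key : ‖f n‖ * Real.log n ≤ Real.log n := by
        calc ‖f n‖ * Real.log n
            = ‖f n * (Real.log n : ℂ)‖ := by
              rw [norm_mul, Complex.norm_real, Real.norm_eq_abs, abs_of_pos hlog]
          _ = ‖∑ d ∈ n.divisors, Λf d * f (n / d)‖ := by rw [hconv n hn]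
          _ ≤ ∑ d ∈ n.divisors, ‖Λf d * f (n / d)‖ :=
              norm_sum_le _ _
          _ ≤ ∑ d ∈ n.divisors, ArithmeticFunction.vonMangoldt d := by
              apply Finset.sum_le_sum
              intro d hd
              rw [Nat.mem_divisors] at hd
              obtain ⟨hdvd, hn0⟩ := hd
              rw [norm_mul]
              rcases eq_or_ne d 1 with rfl | hd1
              · have : ‖Λf 1‖ ≤ 0 := by simpa using hΛ 1
                have h0 : ‖Λf 1‖ = 0 :=
                  le_antisymm this (norm_nonneg _)
                simp [h0, ArithmeticFunction.vonMangoldt_nonneg]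
              · have hd2 : 2 ≤ d := by
                  rcases Nat.eq_zero_or_pos d with rfl | hdpos
                  · exact absurd (Nat.eq_zero_of_zero_dvd hdvd) hn0
                  · omega
                have hlt : n / d < n := Nat.div_lt_self (by omega) (by omega)
                have hge : 1 ≤ n / d := Nat.one_le_div_iff (by omega) |>.mpr
                  (Nat.le_of_dvd (by omega) hdvd)
                have hfle := ih (n / d) hlt hge
                calc ‖Λf d‖ * ‖f (n / d)‖
                    ≤ ArithmeticFunction.vonMangoldt d * 1 :=
                      mul_le_mul (hΛ d) hfle (norm_nonneg _)
                        ArithmeticFunction.vonMangoldt_nonneg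
                  _ = _ := mul_one _
          _ = Real.log n := ArithmeticFunction.vonMangoldt_sum
      exact le_of_mul_le_mul_right (by simpa using key) hlog
end

section
/- Let Q ≥ 1 and x ≥ 1. For each modulus q with Q < q ≤ 2Q fix a residue a_q coprime to q and a complex number ξ_q of modulus 1, and define F(n) = ∑_{q ∼ Q} ξ_q (1_{n ≡ a_q (mod q)} − (1/q_r) 1_{n ≡ a_q (mod q_s)}), where q = q_s q_r is the factorization of q into its w-smooth part q_s and w-rough part q_r. Then for every positive integer d ≤ x/(2Q), one has d · ∑_{n ≤ x, d ∣ n} |F(n)| ≪ x, with an absolute implied constant. -/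
open Finset

/-- The largest `w`-smooth divisor of `q` (its `w`-smooth part). -/
noncomputable def smoothPart (w : ℝ) (q : ℕ) : ℕ :=
  ∏ p ∈ q.primeFactors.filter (fun p : ℕ => (p : ℝ) ≤ w), p ^ q.factorization p

/-- The `w`-rough part of `q`. -/
noncomputable def roughPart (w : ℝ) (q : ℕ) : ℕ := q / smoothPart w q

lemma smoothPart_dvd (w : ℝ) {q : ℕ} (hq : q ≠ 0) : smoothPart w q ∣ q := by
  have h1 : smoothPart w q ∣ ∏ p ∈ q.primeFactors, p ^ q.factorization p :=
    Finset.prod_dvd_prod_of_subset _ _ _ (Finset.filter_subset _ _)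
  have h2 : ∏ p ∈ q.primeFactors, p ^ q.factorization p = q := by
    conv_rhs => rw [← Nat.factorization_prod_pow_eq_self hq]
    rw [Nat.factorization, Finsupp.prod]
  rwa [h2] at h1

lemma smoothPart_pos (w : ℝ) (q : ℕ) : 0 < smoothPart w q := by
  apply Finset.prod_pos
  intro p hp
  exact pow_pos (Nat.pos_of_mem_primeFactors (Finset.mem_filter.mp hp).1) _

lemma rough_mul_smooth (w : ℝ) {q : ℕ} (hq : q ≠ 0) :
    roughPart w q * smoothPart w q = q :=
  Nat.div_mul_cancel (smoothPart_dvd w hq)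

lemma roughPart_pos (w : ℝ) {q : ℕ} (hq : q ≠ 0) : 0 < roughPart w q :=
  Nat.div_pos (Nat.le_of_dvd (Nat.pos_of_ne_zero hq) (smoothPart_dvd w hq)) (smoothPart_pos w q)

lemma count_le (d m N a : ℕ) (hdm : Nat.Coprime d m) :
    ((Finset.Icc 1 N).filter (fun n => d ∣ n ∧ n % m = a % m)).card ≤ N / (d * m) + 1 := by
  classical
  have := Finset.card_le_card_of_injOn (fun n => n / (d * m))
    (s := (Finset.Icc 1 N).filter (fun n => d ∣ n ∧ n % m = a % m))
    (t := Finset.range (N / (d * m) + 1)) ?_ ?_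
  · simpa using this
  · intro n hn
    simp only [Finset.mem_coe, Finset.mem_filter, Finset.mem_Icc] at hn
    exact Finset.mem_range.2 (Nat.lt_succ_of_le (Nat.div_le_div_right hn.1.2))
  · intro n hn n' hn' hEq
    simp only [Finset.mem_coe, Finset.mem_filter, Finset.mem_Icc] at hn hn'
    have h1 : n ≡ n' [MOD d] := (Nat.modEq_zero_iff_dvd.2 hn.2.1).trans
      (Nat.modEq_zero_iff_dvd.2 hn'.2.1).symm
    have h2 : n ≡ n' [MOD m] := hn.2.2.trans hn'.2.2.symm
    have h3 : n ≡ n' [MOD d * m] :=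
      (Nat.modEq_and_modEq_iff_modEq_mul hdm).1 ⟨h1, h2⟩
    have hmod : n % (d * m) = n' % (d * m) := h3
    have hEq2 : n / (d * m) = n' / (d * m) := hEq
    have e1 := Nat.div_add_mod n (d * m)
    have e2 := Nat.div_add_mod n' (d * m)
    rw [hEq2, hmod] at e1
    omega

lemma count_zero (d m N a : ℕ) (hdm : ¬ Nat.Coprime d m) (ham : Nat.Coprime a m) :
    ((Finset.Icc 1 N).filter (fun n => d ∣ n ∧ n % m = a % m)) = ∅ := by
  rw [Finset.filter_eq_empty_iff]
  rintro n hn ⟨hdn, hmod⟩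
  apply hdm
  set g := Nat.gcd d m with hg
  have hgm : g ∣ m := Nat.gcd_dvd_right d m
  have hgn : g ∣ n := (Nat.gcd_dvd_left d m).trans hdn
  have h2 : n ≡ a [MOD g] := Nat.ModEq.of_dvd hgm hmod
  have h0 : (0:ℕ) ≡ n [MOD g] := (Nat.modEq_zero_iff_dvd.2 hgn).symm
  have hga : g ∣ a := Nat.modEq_zero_iff_dvd.1 (h0.trans h2).symm
  have h4 : g ∣ Nat.gcd a m := Nat.dvd_gcd hga hgm
  have h5 : g ∣ 1 := ham ▸ h4
  exact Nat.dvd_one.1 h5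

lemma key (d m N a : ℕ) (hd : 0 < d) (hm : 0 < m) (ham : Nat.Coprime a m)
    (x : ℝ) (hN : (N : ℝ) ≤ x) :
    (d : ℝ) * (((Finset.Icc 1 N).filter (fun n => d ∣ n ∧ n % m = a % m)).card : ℝ)
      ≤ x / m + d := by
  have hx0 : (0:ℝ) ≤ x := le_trans (Nat.cast_nonneg N) hN
  have hd' : (0:ℝ) < d := by exact_mod_cast hd
  have hm' : (0:ℝ) < m := by exact_mod_cast hm
  by_cases hdm : Nat.Coprime d m
  · have h1 := count_le d m N a hdm
    have h2 : (((Finset.Icc 1 N).filter (fun n => d ∣ n ∧ n % m = a % m)).card : ℝ)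
        ≤ ((N / (d * m) : ℕ) : ℝ) + 1 := by exact_mod_cast h1
    have h3 : ((N / (d * m) : ℕ) : ℝ) ≤ (N : ℝ) / ((d : ℝ) * (m : ℝ)) := by
      have := Nat.cast_div_le (α := ℝ) (m := N) (n := d * m)
      push_cast at this
      exact this
    calc (d : ℝ) * _ ≤ (d : ℝ) * ((N : ℝ) / ((d : ℝ) * (m : ℝ)) + 1) := by
          apply mul_le_mul_of_nonneg_left _ hd'.le
          exact h2.trans (by linarith)
      _ = (N : ℝ) / m + d := by field_simp
      _ ≤ x / m + d := by gcongr
  · rw [count_zero d m N a hdm ham]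
    simp
    positivity

/-- For `F(n) = ∑_{Q < q ≤ 2Q} ξ_q (1_{n ≡ a_q (q)} − (1/q_r) 1_{n ≡ a_q (q_s)})` with
`|ξ_q| = 1` and `a_q` coprime to `q`, one has `d · ∑_{n ≤ x, d ∣ n} |F(n)| ≪ x`
uniformly for `d ≤ x/(2Q)`, with an absolute implied constant. -/
theorem divisor_weighted_L1_bound :
    ∃ C : ℝ, 0 < C ∧ ∀ (w : ℝ), 2 ≤ w → ∀ (Q : ℕ), 1 ≤ Q → ∀ (x : ℝ), 1 ≤ x →
      ∀ (ξ : ℕ → ℂ), (∀ q, ‖ξ q‖ = 1) →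
      ∀ (a : ℕ → ℕ), (∀ q ∈ Finset.Ioc Q (2 * Q), Nat.Coprime (a q) q) →
      ∀ d : ℕ, 0 < d → (d : ℝ) ≤ x / (2 * Q) →
      (d : ℝ) * ∑ n ∈ (Finset.Icc 1 ⌊x⌋₊).filter (fun n => d ∣ n),
        ‖∑ q ∈ Finset.Ioc Q (2 * Q), ξ q *
          ((if n % q = a q % q then (1 : ℂ) else 0) -
            (1 / (roughPart w q : ℂ)) *
              (if n % smoothPart w q = a q % smoothPart w q then (1 : ℂ) else 0))‖ ≤
        C * x := by
  classical
  refine ⟨3, by norm_num, ?_⟩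
  intro w hw Q hQ x hx ξ hξ a ha d hd hdx
  set N := ⌊x⌋₊ with hNdef
  set S := (Finset.Icc 1 N).filter (fun n => d ∣ n) with hS
  set I := Finset.Ioc Q (2 * Q) with hI
  have hQ0 : (0:ℝ) < Q := by exact_mod_cast hQ
  have hx0 : (0:ℝ) ≤ x := by linarith
  have hxN : (N : ℝ) ≤ x := Nat.floor_le hx0
  have hd' : (0:ℝ) ≤ d := Nat.cast_nonneg d
  -- the real majorant
  set g : ℕ → ℕ → ℝ := fun q n =>
    (if n % q = a q % q then (1:ℝ) else 0) +
      (1 / (roughPart w q : ℝ)) *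
        (if n % smoothPart w q = a q % smoothPart w q then (1:ℝ) else 0) with hg
  -- pointwise bound
  have step1 : ∀ n : ℕ,
      ‖∑ q ∈ I, ξ q *
        ((if n % q = a q % q then (1 : ℂ) else 0) -
          (1 / (roughPart w q : ℂ)) *
            (if n % smoothPart w q = a q % smoothPart w q then (1 : ℂ) else 0))‖
      ≤ ∑ q ∈ I, g q n := by
    intro n
    refine le_trans (norm_sum_le _ _) (Finset.sum_le_sum fun q hq => ?_)
    rw [norm_mul, hξ q, one_mul]
    refine le_trans (norm_sub_le _ _) ?_
    have e1 : ‖if n % q = a q % q then (1 : ℂ) else 0‖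
        = (if n % q = a q % q then (1:ℝ) else 0) := by split <;> simp
    have e2 : ‖(1 / (roughPart w q : ℂ)) *
        (if n % smoothPart w q = a q % smoothPart w q then (1 : ℂ) else 0)‖
        = (1 / (roughPart w q : ℝ)) *
          (if n % smoothPart w q = a q % smoothPart w q then (1:ℝ) else 0) := by
      rw [norm_mul]
      congr 1
      · simp
      · split <;> simp
    rw [e1, e2]
  -- per-q bound
  have step2 : ∀ q ∈ I, (d : ℝ) * ∑ n ∈ S, g q n ≤ 2 * (x / Q) + 2 * d := by
    intro q hq
    obtain ⟨hq1, hq2⟩ := Finset.mem_Ioc.mp hq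
    have hqne : q ≠ 0 := by omega
    have hqpos : 0 < q := by omega
    have hqQ : (Q:ℝ) ≤ q := by exact_mod_cast hq1.le
    set qs := smoothPart w q with hqs
    set qr := roughPart w q with hqr
    have hqs0 : 0 < qs := smoothPart_pos w q
    have hqr0 : 0 < qr := roughPart_pos w hqne
    have hmul : qr * qs = q := rough_mul_smooth w hqne
    have hqr' : (0:ℝ) < qr := by exact_mod_cast hqr0
    have hqs' : (0:ℝ) < qs := by exact_mod_cast hqs0
    have haq : Nat.Coprime (a q) q := ha q hq
    have haqs : Nat.Coprime (a q) qs := haq.coprime_dvd_right (smoothPart_dvd w hqne)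
    -- split the sum
    have hsum : ∑ n ∈ S, g q n
        = (((Finset.Icc 1 N).filter (fun n => d ∣ n ∧ n % q = a q % q)).card : ℝ)
          + (1 / (qr : ℝ)) *
            (((Finset.Icc 1 N).filter (fun n => d ∣ n ∧ n % qs = a q % qs)).card : ℝ) := by
      rw [hg]
      rw [Finset.sum_add_distrib, ← Finset.mul_sum]
      congr 1
      · rw [Finset.sum_boole, hS, Finset.filter_filter]
      · rw [Finset.sum_boole, hS, Finset.filter_filter]
    rw [hsum, mul_add]
    have b1 : (d : ℝ) * (((Finset.Icc 1 N).filter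
        (fun n => d ∣ n ∧ n % q = a q % q)).card : ℝ) ≤ x / q + d :=
      key d q N (a q) hd hqpos haq x hxN
    have b2 : (d : ℝ) * (((Finset.Icc 1 N).filter
        (fun n => d ∣ n ∧ n % qs = a q % qs)).card : ℝ) ≤ x / qs + d :=
      key d qs N (a q) hd hqs0 haqs x hxN
    set c2 : ℝ := (((Finset.Icc 1 N).filter
        (fun n => d ∣ n ∧ n % qs = a q % qs)).card : ℝ) with hc2
    have b3 : (d : ℝ) * ((1 / (qr : ℝ)) * c2) ≤ x / q + d := by
      have h1 : (d : ℝ) * ((1 / (qr : ℝ)) * c2) = (1 / (qr : ℝ)) * ((d:ℝ) * c2) := by ring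
      rw [h1]
      have h2 : (1 / (qr : ℝ)) * ((d:ℝ) * c2) ≤ (1 / (qr : ℝ)) * (x / qs + d) :=
        mul_le_mul_of_nonneg_left b2 (by positivity)
      refine h2.trans ?_
      have hq' : (q:ℝ) = (qr:ℝ) * (qs:ℝ) := by exact_mod_cast hmul.symm
      have e3 : (1 / (qr : ℝ)) * (x / qs) = x / q := by
        rw [hq']; field_simp
      have e4 : (1 / (qr : ℝ)) * (d:ℝ) ≤ d := by
        rw [one_div, inv_mul_le_iff₀ hqr']
        nlinarith [hd', (by exact_mod_cast hqr0 : (1:ℝ) ≤ qr)]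
      calc (1 / (qr : ℝ)) * (x / qs + d)
          = (1 / (qr : ℝ)) * (x / qs) + (1 / (qr : ℝ)) * d := by ring
        _ ≤ x / q + d := add_le_add (le_of_eq e3) e4
    have hxq : x / q ≤ x / Q := by gcongr
    linarith
  -- put it together
  calc (d : ℝ) * ∑ n ∈ S, ‖∑ q ∈ I, ξ q *
        ((if n % q = a q % q then (1 : ℂ) else 0) -
          (1 / (roughPart w q : ℂ)) *
            (if n % smoothPart w q = a q % smoothPart w q then (1 : ℂ) else 0))‖
      ≤ (d : ℝ) * ∑ n ∈ S, ∑ q ∈ I, g q n := by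
        exact mul_le_mul_of_nonneg_left (Finset.sum_le_sum fun n _ => step1 n) hd'
    _ = ∑ q ∈ I, (d : ℝ) * ∑ n ∈ S, g q n := by
        rw [Finset.sum_comm, Finset.mul_sum]
    _ ≤ ∑ q ∈ I, (2 * (x / Q) + 2 * d) := Finset.sum_le_sum step2
    _ = (Q : ℝ) * (2 * (x / Q) + 2 * d) := by
        rw [Finset.sum_const, hI, Nat.card_Ioc]
        have : 2 * Q - Q = Q := by omega
        rw [this, nsmul_eq_mul]
    _ ≤ 3 * x := by
        have h1 : (Q:ℝ) * (2 * (x / Q)) = 2 * x := by field_simp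
        have h2 : (Q:ℝ) * (2 * d) ≤ x := by
          rw [le_div_iff₀ (by positivity : (0:ℝ) < 2 * Q)] at hdx
          nlinarith
        nlinarith [h1, h2]
end

section
/- Fix w ≥ 2 and Q ≥ 2. Then ∑_{q,q' ∼ Q, (q_r, q_r') > 1} (q,q')/φ((q,q')) ≪ Q²/(w log w), where q ∼ Q means Q < q ≤ 2Q, (q,q') is gcd, q_r denotes the w-rough part of q (the largest divisor of q with no prime factor ≤ w), and the sum is over pairs (q,q') with gcd(q_r, q_r') > 1. -/
open Finset

lemma aux_sum_cube (N : ℕ) : ∑ k ∈ Icc 1 N, (1:ℝ)/(k:ℝ)^3 ≤ 2 := by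
  have h : ∀ M : ℕ, ∑ k ∈ Icc 1 (M+1), (1:ℝ)/(k:ℝ)^3 ≤ 2 - 1/(M+1) := by
    intro M
    induction M with
    | zero => simp; norm_num
    | succ n ih =>
      rw [Finset.sum_Icc_succ_top (by omega)]
      push_cast
      have h1 : (0:ℝ) < n + 1 := by positivity
      have h2 : (0:ℝ) < n + 2 := by positivity
      have key : (1:ℝ)/((n:ℝ)+2)^3 ≤ 1/((n:ℝ)+1) - 1/((n:ℝ)+2) := by
        rw [div_sub_div _ _ (ne_of_gt h1) (ne_of_gt h2), div_le_div_iff₀ (by positivity) (by positivity)]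
        nlinarith [sq_nonneg ((n:ℝ)+2)]
      push_cast at ih ⊢
      have key2 : ((n:ℝ)+1+1) = (n:ℝ)+2 := by ring
      rw [key2]
      linarith
  match N with
  | 0 => simp
  | (M+1) =>
    have := h M
    have h2 : (0:ℝ) < (M:ℝ) + 1 := by positivity
    have := one_div_pos.mpr h2
    push_cast at *
    linarith

lemma aux_prod_sq (N : ℕ) : ((N:ℝ)+2)/(2*((N:ℝ)+1)) ≤ ∏ k ∈ Icc 2 (N+1), (1 - 1/(k:ℝ)^2) := by
  induction N with
  | zero => norm_num
  | succ n ih =>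
    rw [Finset.prod_Icc_succ_top (by omega)]
    have h1 : (0:ℝ) < n + 1 := by positivity
    have h2 : (0:ℝ) < n + 2 := by positivity
    have key : ((n:ℝ)+2)/(2*((n:ℝ)+1)) * (1 - 1/((n:ℝ)+2)^2) = ((n:ℝ)+3)/(2*((n:ℝ)+2)) := by
      field_simp
      ring
    have hf : (0:ℝ) ≤ 1 - 1/((n:ℝ)+2)^2 := by
      rw [sub_nonneg, div_le_one (by positivity)]
      nlinarith
    have h3 := mul_le_mul_of_nonneg_right ih hf
    rw [key] at h3
    have heq : ((n+1:ℕ):ℝ)+2 = (n:ℝ)+3 := by push_cast; ring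
    have heq2 : ((n+1:ℕ):ℝ)+1 = (n:ℝ)+2 := by push_cast; ring
    have heq3 : ((n+1+1:ℕ):ℝ) = (n:ℝ)+2 := by push_cast; ring
    rw [heq, heq2, heq3]
    exact h3

lemma aux_prod_half (s : Finset ℕ) (hs : ∀ k ∈ s, 2 ≤ k) :
    (1/2:ℝ) ≤ ∏ k ∈ s, (1 - 1/(k:ℝ)^2) := by
  have hnn : ∀ k ∈ s, (0:ℝ) ≤ 1 - 1/(k:ℝ)^2 := by
    intro k hk
    have : 2 ≤ k := hs k hk
    rw [sub_nonneg, div_le_one (by positivity)]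
    have : (2:ℝ) ≤ (k:ℝ) := by exact_mod_cast this
    nlinarith
  set N := s.sup id with hN
  have hsub : s ⊆ Icc 2 (N+1) := by
    intro k hk
    simp only [mem_Icc]
    exact ⟨hs k hk, le_trans (Finset.le_sup (f := id) hk) (by omega)⟩
  have h1 : ∏ k ∈ Icc 2 (N+1), (1 - 1/(k:ℝ)^2) ≤ ∏ k ∈ s, (1 - 1/(k:ℝ)^2) := by
    rw [← Finset.prod_sdiff hsub]
    have hle : ∏ k ∈ Icc 2 (N+1) \ s, (1 - 1/(k:ℝ)^2) ≤ 1 := by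
      apply Finset.prod_le_one
      · intro k hk
        have hk2 : 2 ≤ k := (mem_Icc.1 (Finset.mem_sdiff.1 hk).1).1
        rw [sub_nonneg, div_le_one (by positivity)]
        have : (2:ℝ) ≤ (k:ℝ) := by exact_mod_cast hk2
        nlinarith
      · intro k _
        have : (0:ℝ) ≤ 1/(k:ℝ)^2 := by positivity
        linarith
    have hpos : (0:ℝ) ≤ ∏ k ∈ s, (1 - 1/(k:ℝ)^2) := Finset.prod_nonneg hnn
    calc (∏ k ∈ Icc 2 (N+1) \ s, (1 - 1/(k:ℝ)^2)) * ∏ k ∈ s, (1 - 1/(k:ℝ)^2)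
        ≤ 1 * ∏ k ∈ s, (1 - 1/(k:ℝ)^2) := mul_le_mul_of_nonneg_right hle hpos
      _ = _ := one_mul _
  refine le_trans (le_trans ?_ (aux_prod_sq N)) h1
  rw [div_le_div_iff₀ (by norm_num) (by positivity)]
  nlinarith [Nat.cast_nonneg (α := ℝ) N]

lemma aux_totient_ratio {n : ℕ} (hn : 0 < n) :
    (n:ℝ)/(Nat.totient n : ℝ) ≤ 2 * ∑ d ∈ n.divisors, 1/(d:ℝ) := by
  have hn0 : n ≠ 0 := hn.ne'
  set s := n.primeFactors with hs
  have hprime : ∀ p ∈ s, Nat.Prime p := fun p hp => Nat.prime_of_mem_primeFactors hp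
  have h2le : ∀ p ∈ s, 2 ≤ p := fun p hp => (hprime p hp).two_le
  -- totient formula over ℝ
  have hphiQ := Nat.totient_eq_mul_prod_factors n
  have hphi : (Nat.totient n : ℝ) = (n:ℝ) * ∏ p ∈ s, (1 - (p:ℝ)⁻¹) := by
    have := congrArg (fun q : ℚ => (q : ℝ)) hphiQ
    push_cast at this
    exact_mod_cast this
  set A := ∏ p ∈ s, (1 - (p:ℝ)⁻¹) with hA
  set B := ∏ p ∈ s, (1 + (p:ℝ)⁻¹) with hB
  have hApos : 0 < A := by
    apply Finset.prod_pos
    intro p hp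
    have : (2:ℝ) ≤ (p:ℝ) := by exact_mod_cast h2le p hp
    have : (p:ℝ)⁻¹ ≤ 1/2 := by
      rw [inv_le_iff_one_le_mul₀ (by linarith)] <;> linarith
    linarith
  have hBpos : 0 < B := by
    apply Finset.prod_pos
    intro p hp
    have : (0:ℝ) ≤ (p:ℝ)⁻¹ := by positivity
    linarith
  have hAB : (1/2:ℝ) ≤ A * B := by
    rw [hA, hB, ← Finset.prod_mul_distrib]
    refine le_trans (aux_prod_half s h2le) (le_of_eq (Finset.prod_congr rfl ?_))
    intro p hp
    have hp0 : (0:ℝ) < (p:ℝ) := by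
      have := h2le p hp; positivity
    field_simp
    ring
  -- n / φ n = A⁻¹
  have hratio : (n:ℝ)/(Nat.totient n : ℝ) = A⁻¹ := by
    rw [hphi]
    rw [div_mul_eq_div_div]
    rw [div_self (by exact_mod_cast hn0), one_div]
  have hinv : A⁻¹ ≤ 2 * B := by
    have h := mul_le_mul_of_nonneg_right hAB (le_of_lt (inv_pos.2 hApos))
    rw [mul_assoc, mul_comm B, ← mul_assoc, mul_inv_cancel₀ hApos.ne', one_mul] at h
    calc A⁻¹ = 2 * (1/2 * A⁻¹) := by ring
      _ ≤ 2 * B := by linarith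
  -- B ≤ divisor sum
  have hBsum : B ≤ ∑ d ∈ n.divisors, 1/(d:ℝ) := by
    have hexp : B = ∑ t ∈ s.powerset, ((∏ p ∈ t, p : ℕ):ℝ)⁻¹ := by
      rw [hB]
      have : ∀ p ∈ s, (1 + (p:ℝ)⁻¹) = ((p:ℝ)⁻¹ + 1) := fun p _ => by ring
      rw [Finset.prod_congr rfl this, Finset.prod_add]
      refine Finset.sum_congr rfl fun t ht => ?_
      rw [Finset.prod_const_one, mul_one, Nat.cast_prod]
      simp
    rw [hexp]
    have hinj : ∀ t ∈ s.powerset, ∀ t' ∈ s.powerset,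
        (∏ p ∈ t, p) = (∏ p ∈ t', p) → t = t' := by
      intro t ht t' ht' h
      have h1 : Nat.primeFactors (∏ p ∈ t, p) = t :=
        Nat.primeFactors_prod (fun p hp => hprime p (Finset.mem_powerset.1 ht hp))
      have h2 : Nat.primeFactors (∏ p ∈ t', p) = t' :=
        Nat.primeFactors_prod (fun p hp => hprime p (Finset.mem_powerset.1 ht' hp))
      rw [← h1, ← h2, h]
    have himg : ∑ t ∈ s.powerset, ((∏ p ∈ t, p : ℕ):ℝ)⁻¹
        = ∑ d ∈ s.powerset.image (fun t => ∏ p ∈ t, p), (d:ℝ)⁻¹ :=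
      (Finset.sum_image (g := fun t : Finset ℕ => ∏ p ∈ t, p) (f := fun d : ℕ => (d:ℝ)⁻¹) hinj).symm
    rw [himg]
    simp only [one_div]
    apply Finset.sum_le_sum_of_subset_of_nonneg
    · intro d hd
      obtain ⟨t, ht, rfl⟩ := Finset.mem_image.1 hd
      rw [Nat.mem_divisors]
      refine ⟨dvd_trans ?_ (Nat.prod_primeFactors_dvd n), hn0⟩
      exact Finset.prod_dvd_prod_of_subset _ _ _ (Finset.mem_powerset.1 ht)
    · intro d _ _
      positivity
  calc (n:ℝ)/(Nat.totient n : ℝ) = A⁻¹ := hratio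
    _ ≤ 2 * B := hinv
    _ ≤ 2 * ∑ d ∈ n.divisors, 1/(d:ℝ) := by
        have : ∑ d ∈ n.divisors, (d:ℝ)⁻¹ = ∑ d ∈ n.divisors, 1/(d:ℝ) := by
          simp [one_div]
        linarith [hBsum, this ▸ hBsum]

lemma aux_card (Q m : ℕ) (hm : 0 < m) :
    (((Ioc Q (2*Q)).filter (fun q => m ∣ q)).card : ℝ) ≤ 2*(Q:ℝ)/(m:ℝ) := by
  have hsub : (Ioc Q (2*Q)).filter (fun q => m ∣ q) ⊆ (Ioc 0 (2*Q)).filter (fun q => m ∣ q) :=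
    Finset.filter_subset_filter _ (Finset.Ioc_subset_Ioc_left (Nat.zero_le Q))
  have hcard : ((Ioc Q (2*Q)).filter (fun q => m ∣ q)).card ≤ (2*Q)/m := by
    rw [← Nat.Ioc_filter_dvd_card_eq_div]
    exact Finset.card_le_card hsub
  calc (((Ioc Q (2*Q)).filter (fun q => m ∣ q)).card : ℝ) ≤ ((2*Q/m : ℕ) : ℝ) := by
        exact_mod_cast hcard
    _ ≤ (2*Q : ℕ)/(m:ℝ) := Nat.cast_div_le
    _ = 2*(Q:ℝ)/(m:ℝ) := by push_cast; ring

lemma aux_T {p : ℕ} (N : ℕ) (hp : p.Prime) :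
    ∑ d ∈ Icc 1 N, 1/((d:ℝ) * (Nat.lcm p d:ℝ)^2) ≤ 3/(p:ℝ)^2 := by
  have hp0 : (0:ℝ) < p := by exact_mod_cast hp.pos
  have hp2 : (2:ℝ) ≤ p := by exact_mod_cast hp.two_le
  rw [← Finset.sum_filter_add_sum_filter_not (Icc 1 N) (fun d => p ∣ d)]
  have hpart1 : ∑ d ∈ (Icc 1 N).filter (fun d => ¬ p ∣ d), 1/((d:ℝ) * (Nat.lcm p d:ℝ)^2)
      ≤ 2/(p:ℝ)^2 := by
    have heq : ∀ d ∈ (Icc 1 N).filter (fun d => ¬ p ∣ d),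
        1/((d:ℝ) * (Nat.lcm p d:ℝ)^2) = (1/(p:ℝ)^2) * (1/(d:ℝ)^3) := by
      intro d hd
      obtain ⟨hd1, hd2⟩ := Finset.mem_filter.1 hd
      have hlcm : Nat.lcm p d = p * d := (hp.coprime_iff_not_dvd.2 hd2).lcm_eq_mul
      rw [hlcm]
      have hd0 : (0:ℝ) < d := by
        have := (Finset.mem_Icc.1 hd1).1; exact_mod_cast Nat.lt_of_lt_of_le Nat.zero_lt_one this
      push_cast
      field_simp
    rw [Finset.sum_congr rfl heq, ← Finset.mul_sum]
    have hs : ∑ d ∈ (Icc 1 N).filter (fun d => ¬ p ∣ d), 1/(d:ℝ)^3 ≤ 2 := by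
      refine le_trans (Finset.sum_le_sum_of_subset_of_nonneg (Finset.filter_subset _ _) ?_) (aux_sum_cube N)
      intro d _ _; positivity
    calc (1/(p:ℝ)^2) * ∑ d ∈ (Icc 1 N).filter (fun d => ¬ p ∣ d), 1/(d:ℝ)^3
        ≤ (1/(p:ℝ)^2) * 2 := by
          apply mul_le_mul_of_nonneg_left hs; positivity
      _ = 2/(p:ℝ)^2 := by ring
  have hpart2 : ∑ d ∈ (Icc 1 N).filter (fun d => p ∣ d), 1/((d:ℝ) * (Nat.lcm p d:ℝ)^2)
      ≤ 1/(p:ℝ)^2 := by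
    have himg : (Icc 1 N).filter (fun d => p ∣ d) = (Icc 1 (N/p)).image (fun k => p * k) := by
      ext d
      simp only [Finset.mem_filter, Finset.mem_Icc, Finset.mem_image]
      constructor
      · rintro ⟨⟨hd1, hd2⟩, k, rfl⟩
        refine ⟨k, ⟨?_, ?_⟩, rfl⟩
        · rcases Nat.eq_zero_or_pos k with rfl | h
          · simp at hd1
          · exact h
        · rw [Nat.le_div_iff_mul_le hp.pos, mul_comm]
          exact hd2
      · rintro ⟨k, ⟨hk1, hk2⟩, rfl⟩
        rw [Nat.le_div_iff_mul_le hp.pos] at hk2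
        rw [mul_comm] at hk2
        exact ⟨⟨Nat.one_le_iff_ne_zero.2 (Nat.mul_ne_zero hp.pos.ne' (by omega)), hk2⟩, Dvd.intro k rfl⟩
    rw [himg, Finset.sum_image (by intro x _ y _ h; exact Nat.eq_of_mul_eq_mul_left hp.pos h)]
    have heq : ∀ k ∈ Icc 1 (N/p),
        1/(((p*k : ℕ):ℝ) * (Nat.lcm p (p*k):ℝ)^2) = (1/(p:ℝ)^3) * (1/(k:ℝ)^3) := by
      intro k hk
      have hk0 : (0:ℝ) < k := by
        have := (Finset.mem_Icc.1 hk).1; exact_mod_cast Nat.lt_of_lt_of_le Nat.zero_lt_one this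
      have hlcm : Nat.lcm p (p*k) = p*k :=
        Nat.dvd_antisymm (Nat.lcm_dvd (Dvd.intro k rfl) dvd_rfl) (Nat.dvd_lcm_right _ _)
      rw [hlcm]
      push_cast
      field_simp
    rw [Finset.sum_congr rfl heq, ← Finset.mul_sum]
    have hs : ∑ k ∈ Icc 1 (N/p), 1/(k:ℝ)^3 ≤ 2 := aux_sum_cube _
    calc (1/(p:ℝ)^3) * ∑ k ∈ Icc 1 (N/p), 1/(k:ℝ)^3 ≤ (1/(p:ℝ)^3) * 2 := by
          apply mul_le_mul_of_nonneg_left hs; positivity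
      _ = 2/(p:ℝ)^3 := by ring
      _ ≤ 1/(p:ℝ)^2 := by
          rw [div_le_div_iff₀ (by positivity) (by positivity)]
          nlinarith
  have h3 : (1:ℝ)/(p:ℝ)^2 + 2/(p:ℝ)^2 = 3/(p:ℝ)^2 := by ring
  linarith


lemma aux_theta (n : ℕ) :
    ∑ p ∈ (range (n+1)).filter Nat.Prime, Real.log p ≤ (n:ℝ) * Real.log 4 := by
  have h1 : ∑ p ∈ (range (n+1)).filter Nat.Prime, Real.log p = Real.log (primorial n) := by
    rw [primorial, Nat.cast_prod, Real.log_prod]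
    intro p hp
    have := (Finset.mem_filter.1 hp).2.pos
    positivity
  rw [h1]
  have h2 : (primorial n : ℝ) ≤ (4:ℝ)^n := by exact_mod_cast primorial_le_4_pow n
  calc Real.log (primorial n) ≤ Real.log ((4:ℝ)^n) := by
        apply Real.log_le_log (by exact_mod_cast primorial_pos n) h2
    _ = (n:ℝ) * Real.log 4 := by rw [Real.log_pow]

lemma aux_log4 : Real.log 4 ≤ 3/2 := by
  rw [Real.log_le_iff_le_exp (by norm_num)]
  have h1 : Real.exp (3/2) = Real.exp 1 * Real.exp (1/2) := by
    rw [← Real.exp_add]; norm_num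
  have h2 : (1:ℝ)/2 + 1 ≤ Real.exp (1/2) := Real.add_one_le_exp _
  have h3 : (2.7182818283 : ℝ) < Real.exp 1 := Real.exp_one_gt_d9
  rw [h1]
  nlinarith [Real.exp_pos (1/2:ℝ)]

lemma aux_tail (w : ℝ) (hw : 2 ≤ w) (K : ℕ) :
    ∑ p ∈ (Icc 1 K).filter (fun p => Nat.Prime p ∧ w < (p:ℝ)), 1/(p:ℝ)^2
      ≤ 6/(w * Real.log w) := by
  classical
  set P := (Icc 1 K).filter (fun p => Nat.Prime p ∧ w < (p:ℝ)) with hP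
  have hw0 : (0:ℝ) < w := by linarith
  have hlogw : 0 < Real.log w := Real.log_pos (by linarith)
  have hPfacts : ∀ p ∈ P, Nat.Prime p ∧ w < (p:ℝ) := by
    intro p hp; exact (Finset.mem_filter.1 hp).2
  have hPpos : ∀ p ∈ P, (0:ℝ) < p := by
    intro p hp; exact lt_trans hw0 (hPfacts p hp).2
  have hlogp : ∀ p ∈ P, 0 < Real.log (p:ℝ) := by
    intro p hp
    exact lt_of_lt_of_le hlogw (Real.log_le_log hw0 (le_of_lt (hPfacts p hp).2))
  -- step 1 : 1/p² ≤ (1/log w) * (log p / p²)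
  have step1 : ∑ p ∈ P, 1/(p:ℝ)^2 ≤ (1/Real.log w) * ∑ p ∈ P, Real.log p/(p:ℝ)^2 := by
    rw [Finset.mul_sum]
    apply Finset.sum_le_sum
    intro p hp
    have h1 : Real.log w ≤ Real.log p := Real.log_le_log hw0 (le_of_lt (hPfacts p hp).2)
    have h3 : 1 ≤ Real.log p / Real.log w := by rw [le_div_iff₀ hlogw]; linarith
    have h4 : (0:ℝ) ≤ 1/(p:ℝ)^2 := by positivity
    calc 1/(p:ℝ)^2 = 1 * (1/(p:ℝ)^2) := (one_mul _).symm
      _ ≤ (Real.log p/Real.log w) * (1/(p:ℝ)^2) := mul_le_mul_of_nonneg_right h3 h4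
      _ = (1/Real.log w) * (Real.log p/(p:ℝ)^2) := by ring
  set M := K + 1 with hM
  set c : ℕ → ℕ → Prop := fun j p => (2:ℝ)^j * w < (p:ℝ) ∧ (p:ℝ) ≤ 2^(j+1) * w with hc
  -- step 2 : dyadic decomposition
  have step2 : ∑ p ∈ P, Real.log p/(p:ℝ)^2 ≤
      ∑ j ∈ range M, ∑ p ∈ P, (if c j p then Real.log p/(p:ℝ)^2 else 0) := by
    rw [Finset.sum_comm]
    apply Finset.sum_le_sum
    intro p hp
    have hpK : p ≤ K := (Finset.mem_Icc.1 (Finset.mem_filter.1 hp).1).2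
    have hwp : w < (p:ℝ) := (hPfacts p hp).2
    have hwit : (p:ℝ) ≤ 2^(K+1) * w := by
      have h1 : (p:ℝ) ≤ (K:ℝ) := by exact_mod_cast hpK
      have h2 : (K:ℝ) ≤ (2:ℝ)^K := by
        have h := Nat.lt_two_pow_self (n := K)
        have h' : (K:ℝ) < ((2^K : ℕ):ℝ) := by exact_mod_cast h
        push_cast at h'
        linarith
      have h3 : (2:ℝ)^K ≤ 2^(K+1) * w := by
        rw [pow_succ]
        nlinarith [pow_pos (show (0:ℝ) < 2 by norm_num) K]
      linarith
    have hex : ∃ j : ℕ, (p:ℝ) ≤ 2^(j+1) * w := ⟨K, hwit⟩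
    have hupper : (p:ℝ) ≤ 2^(Nat.find hex + 1) * w := Nat.find_spec hex
    have hj₀K : Nat.find hex ≤ K := Nat.find_le hwit
    have hlower : (2:ℝ)^(Nat.find hex) * w < (p:ℝ) := by
      match hj : Nat.find hex with
      | 0 => simpa using hwp
      | (j+1) =>
        have hm := Nat.find_min hex (m := j) (by omega)
        push_neg at hm
        exact hm
    have hs := Finset.single_le_sum (f := fun j => if c j p then Real.log p/(p:ℝ)^2 else 0)
      (fun j _ => by
        by_cases h : c j p
        · simp only [if_pos h]
          have := hlogp p hp
          have := hPpos p hp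
          positivity
        · simp [if_neg h]) (Finset.mem_range.2 (show Nat.find hex < M by omega))
    exact le_trans (le_of_eq (if_pos (show c (Nat.find hex) p from ⟨hlower, hupper⟩)).symm) hs
  -- step 3 : per-block bound
  have hlog4 : (0:ℝ) ≤ Real.log 4 := Real.log_nonneg (by norm_num)
  have step3 : ∀ j, ∑ p ∈ P, (if c j p then Real.log p/(p:ℝ)^2 else 0)
      ≤ (2*Real.log 4/w) * (1/2:ℝ)^j := by
    intro j
    rw [← Finset.sum_filter]
    have hx0 : (0:ℝ) < (2:ℝ)^j := pow_pos (by norm_num) j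
    set x := (2:ℝ)^j with hx
    set nj := ⌊(2:ℝ)^(j+1) * w⌋₊ with hnj
    have hnjle : (nj:ℝ) ≤ 2^(j+1) * w := Nat.floor_le (by positivity)
    have hF1 : ∑ p ∈ P.filter (c j), Real.log p/(p:ℝ)^2
        ≤ ∑ p ∈ P.filter (c j), Real.log p/(x*w)^2 := by
      apply Finset.sum_le_sum
      intro p hp
      have hp' := Finset.mem_filter.1 hp
      have hxp : x * w < (p:ℝ) := hp'.2.1
      have hlp : 0 ≤ Real.log p := le_of_lt (hlogp p hp'.1)
      apply div_le_div_of_nonneg_left hlp (by positivity)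
      have hxw : (0:ℝ) < x * w := by positivity
      nlinarith [mul_pos (sub_pos.2 hxp) (show (0:ℝ) < (p:ℝ) + x*w by positivity)]
    have hF2 : ∑ p ∈ P.filter (c j), Real.log (p:ℝ)
        ≤ ∑ p ∈ (range (nj+1)).filter Nat.Prime, Real.log p := by
      apply Finset.sum_le_sum_of_subset_of_nonneg
      · intro p hp
        have hp' := Finset.mem_filter.1 hp
        have hprime := (hPfacts p hp'.1).1
        have hple : (p:ℝ) ≤ 2^(j+1) * w := hp'.2.2
        have : p ≤ nj := Nat.le_floor hple
        exact Finset.mem_filter.2 ⟨Finset.mem_range.2 (by omega), hprime⟩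
      · intro p hp _
        have hprime := (Finset.mem_filter.1 hp).2
        apply Real.log_nonneg
        exact_mod_cast hprime.one_lt.le
    have hF3 : ∑ p ∈ (range (nj+1)).filter Nat.Prime, Real.log (p:ℝ) ≤ (nj:ℝ) * Real.log 4 :=
      aux_theta nj
    calc ∑ p ∈ P.filter (c j), Real.log p/(p:ℝ)^2
        ≤ ∑ p ∈ P.filter (c j), Real.log p/(x*w)^2 := hF1
      _ = (∑ p ∈ P.filter (c j), Real.log (p:ℝ))/(x*w)^2 := by rw [Finset.sum_div]
      _ ≤ ((nj:ℝ) * Real.log 4)/(x*w)^2 := by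
          apply div_le_div_of_nonneg_right (le_trans hF2 hF3) (by positivity)
      _ ≤ (2*x*w * Real.log 4)/(x*w)^2 := by
          apply div_le_div_of_nonneg_right ?_ (by positivity)
          apply mul_le_mul_of_nonneg_right ?_ hlog4
          rw [pow_succ] at hnjle
          linarith
      _ = (2*Real.log 4/w) * (1/x) := by field_simp
      _ = (2*Real.log 4/w) * (1/2:ℝ)^j := by rw [one_div_pow]
  -- assemble
  have hsum3 : ∑ j ∈ range M, ∑ p ∈ P, (if c j p then Real.log p/(p:ℝ)^2 else 0)
      ≤ (2*Real.log 4/w) * 2 := by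
    calc ∑ j ∈ range M, ∑ p ∈ P, (if c j p then Real.log p/(p:ℝ)^2 else 0)
        ≤ ∑ j ∈ range M, (2*Real.log 4/w) * (1/2:ℝ)^j :=
          Finset.sum_le_sum (fun j _ => step3 j)
      _ = (2*Real.log 4/w) * ∑ j ∈ range M, (1/2:ℝ)^j := by rw [Finset.mul_sum]
      _ ≤ (2*Real.log 4/w) * 2 := by
          apply mul_le_mul_of_nonneg_left (sum_geometric_two_le M) (by positivity)
  have hfin : ∑ p ∈ P, 1/(p:ℝ)^2 ≤ (1/Real.log w) * ((2*Real.log 4/w) * 2) := by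
    refine le_trans step1 ?_
    exact mul_le_mul_of_nonneg_left (le_trans step2 hsum3) (by positivity)
  refine le_trans hfin ?_
  have hL4 := aux_log4
  rw [show (1/Real.log w) * ((2*Real.log 4/w) * 2) = (4*Real.log 4)/(w * Real.log w) by
    field_simp; ring]
  apply div_le_div_of_nonneg_right ?_ (by positivity)
  linarith

lemma aux_rough_eq (w : ℝ) {q : ℕ} (hq : 0 < q) :
    roughPart w q = ∏ p ∈ q.primeFactors.filter (fun p : ℕ => ¬ (p : ℝ) ≤ w),
      p ^ q.factorization p := by
  classical
  have hq0 : q ≠ 0 := hq.ne'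
  have hfac : (∏ p ∈ q.primeFactors.filter (fun p : ℕ => (p : ℝ) ≤ w), p ^ q.factorization p) *
      (∏ p ∈ q.primeFactors.filter (fun p : ℕ => ¬ (p : ℝ) ≤ w), p ^ q.factorization p) = q := by
    rw [Finset.prod_filter_mul_prod_filter_not]
    rw [← Nat.prod_factorization_eq_prod_primeFactors (fun p k => p ^ k)]
    exact Nat.factorization_prod_pow_eq_self hq0
  have hpos : 0 < smoothPart w q := by
    apply Finset.prod_pos
    intro p hp
    have := Nat.pos_of_mem_primeFactors (Finset.mem_filter.1 hp).1
    positivity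
  rw [roughPart]
  apply Nat.div_eq_of_eq_mul_left hpos
  rw [smoothPart, mul_comm]
  exact hfac.symm

lemma aux_rough (w : ℝ) {q p : ℕ} (hq : 0 < q) (hp : p.Prime)
    (hdvd : p ∣ roughPart w q) : w < (p:ℝ) ∧ p ∣ q := by
  classical
  rw [aux_rough_eq w hq] at hdvd
  obtain ⟨r, hr, hpr⟩ := hp.prime.exists_mem_finset_dvd hdvd
  obtain ⟨hrmem, hrw⟩ := Finset.mem_filter.1 hr
  have hrprime : r.Prime := Nat.prime_of_mem_primeFactors hrmem
  have hpr' : p ∣ r := hp.dvd_of_dvd_pow hpr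
  have : p = r := (Nat.prime_dvd_prime_iff_eq hp hrprime).1 hpr'
  subst this
  exact ⟨lt_of_not_ge hrw, Nat.dvd_of_mem_primeFactors hrmem⟩

lemma aux_exists_prime (w : ℝ) {q q' : ℕ} (hq : 0 < q) (hq' : 0 < q')
    (h : 1 < Nat.gcd (roughPart w q) (roughPart w q')) :
    ∃ p : ℕ, p.Prime ∧ w < (p:ℝ) ∧ p ∣ q ∧ p ∣ q' := by
  set g := Nat.gcd (roughPart w q) (roughPart w q') with hg
  have hprime : (g.minFac).Prime := Nat.minFac_prime (by omega)
  have h1 : g.minFac ∣ roughPart w q := dvd_trans (Nat.minFac_dvd g) (Nat.gcd_dvd_left _ _)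
  have h2 : g.minFac ∣ roughPart w q' := dvd_trans (Nat.minFac_dvd g) (Nat.gcd_dvd_right _ _)
  obtain ⟨hw1, hd1⟩ := aux_rough w hq hprime h1
  obtain ⟨_, hd2⟩ := aux_rough w hq' hprime h2
  exact ⟨g.minFac, hprime, hw1, hd1, hd2⟩

/-- `∑_{q,q' ∼ Q, gcd(q_r,q_r') > 1} gcd(q,q')/φ(gcd(q,q')) ≪ Q²/(w log w)`, where
`q ∼ Q` means `Q < q ≤ 2Q` and `q_r` is the `w`-rough part of `q`. -/
theorem gcd_totient_rough_pairs_bound :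
    ∃ C : ℝ, 0 < C ∧ ∀ (w : ℝ), 2 ≤ w → ∀ (Q : ℕ), 2 ≤ Q →
      ∑ q ∈ Finset.Ioc Q (2 * Q), ∑ q' ∈ Finset.Ioc Q (2 * Q),
        (if 1 < Nat.gcd (roughPart w q) (roughPart w q') then
          ((Nat.gcd q q' : ℝ) / (Nat.totient (Nat.gcd q q') : ℝ)) else 0) ≤
      C * (Q : ℝ) ^ 2 / (w * Real.log w) := by
  classical
  refine ⟨200, by norm_num, ?_⟩
  intro w hw Q hQ
  have hw0 : (0:ℝ) < w := by linarith
  have hlogw : 0 < Real.log w := Real.log_pos (by linarith)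
  set I := Finset.Ioc Q (2*Q) with hI
  set D := Finset.Icc 1 (2*Q) with hD
  set P := D.filter (fun p => Nat.Prime p ∧ w < (p:ℝ)) with hP
  set g : ℕ → ℕ → ℝ := fun q q' => (Nat.gcd q q' : ℝ)/(Nat.totient (Nat.gcd q q') : ℝ) with hgdef
  have hg0 : ∀ q q', 0 ≤ g q q' := fun q q' => by positivity
  have hIpos : ∀ q ∈ I, 0 < q := fun q hq => lt_of_le_of_lt (Nat.zero_le Q) (Finset.mem_Ioc.1 hq).1
  have hIle : ∀ q ∈ I, q ≤ 2*Q := fun q hq => (Finset.mem_Ioc.1 hq).2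
  -- indicator function
  set a : ℕ → ℕ → ℕ → ℝ := fun p d q => if p ∣ q ∧ d ∣ q then 1 else 0 with ha
  have ha0 : ∀ p d q, 0 ≤ a p d q := fun p d q => by
    rw [ha]; dsimp only; split <;> norm_num
  -- Step A : reduce to common prime p > w
  have stepA : ∀ q ∈ I, ∀ q' ∈ I,
      (if 1 < Nat.gcd (roughPart w q) (roughPart w q') then g q q' else 0)
      ≤ ∑ p ∈ P, (if p ∣ q ∧ p ∣ q' then g q q' else 0) := by
    intro q hq q' hq'
    have hnn : ∀ i ∈ P, (0:ℝ) ≤ (if i ∣ q ∧ i ∣ q' then g q q' else 0) := by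
      intro i _
      split
      · exact hg0 q q'
      · exact le_refl 0
    by_cases h : 1 < Nat.gcd (roughPart w q) (roughPart w q')
    · rw [if_pos h]
      obtain ⟨p, hpp, hpw, hpq, hpq'⟩ := aux_exists_prime w (hIpos q hq) (hIpos q' hq') h
      have hpmem : p ∈ P := by
        rw [hP, hD]
        refine Finset.mem_filter.2 ⟨Finset.mem_Icc.2 ⟨hpp.one_lt.le, ?_⟩, hpp, hpw⟩
        exact le_trans (Nat.le_of_dvd (hIpos q hq) hpq) (hIle q hq)
      have hsingle := Finset.single_le_sum (f := fun p => if p ∣ q ∧ p ∣ q' then g q q' else 0)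
        hnn hpmem
      simpa [if_pos (And.intro hpq hpq')] using hsingle
    · rw [if_neg h]
      exact Finset.sum_nonneg hnn
  -- Step B : divisor expansion, pointwise
  have stepB : ∀ p ∈ P, ∀ q ∈ I, ∀ q' ∈ I,
      (if p ∣ q ∧ p ∣ q' then g q q' else 0)
      ≤ 2 * ∑ d ∈ D, a p d q * a p d q' * (1/(d:ℝ)) := by
    intro p hpP q hq q' hq'
    have hterm0 : ∀ d ∈ D, (0:ℝ) ≤ a p d q * a p d q' * (1/(d:ℝ)) := by
      intro d hd
      have hd1 : 1 ≤ d := (Finset.mem_Icc.1 hd).1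
      have : (0:ℝ) ≤ 1/(d:ℝ) := by positivity
      exact mul_nonneg (mul_nonneg (ha0 p d q) (ha0 p d q')) this
    by_cases h : p ∣ q ∧ p ∣ q'
    · rw [if_pos h]
      set n := Nat.gcd q q' with hn
      have hn0 : 0 < n := Nat.gcd_pos_of_pos_left q' (hIpos q hq)
      have hsimp : ∀ d ∈ D, a p d q * a p d q' * (1/(d:ℝ))
          = (if d ∣ n then 1/(d:ℝ) else 0) := by
        intro d hd
        rw [ha]
        dsimp only
        by_cases hdn : d ∣ n
        · have hdq : d ∣ q := hdn.trans (Nat.gcd_dvd_left _ _)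
          have hdq' : d ∣ q' := hdn.trans (Nat.gcd_dvd_right _ _)
          rw [if_pos ⟨h.1, hdq⟩, if_pos ⟨h.2, hdq'⟩, if_pos hdn]
          ring
        · have : ¬ (d ∣ q ∧ d ∣ q') := fun hc => hdn (Nat.dvd_gcd hc.1 hc.2)
          rcases not_and_or.1 this with hc | hc
          · rw [if_neg (fun hx : p ∣ q ∧ d ∣ q => hc hx.2), if_neg hdn]; ring
          · rw [if_neg (fun hx : p ∣ q' ∧ d ∣ q' => hc hx.2), if_neg hdn]; ring
      rw [Finset.sum_congr rfl hsimp, ← Finset.sum_filter]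
      have hset : D.filter (fun d => d ∣ n) = n.divisors := by
        ext d
        simp only [hD, Finset.mem_filter, Finset.mem_Icc, Nat.mem_divisors]
        constructor
        · rintro ⟨_, hdn⟩
          exact ⟨hdn, hn0.ne'⟩
        · rintro ⟨hdn, -⟩
          have hd0 : 0 < d := Nat.pos_of_dvd_of_pos hdn hn0
          have hnle : n ≤ 2*Q := le_trans (Nat.le_of_dvd (hIpos q hq) (Nat.gcd_dvd_left _ _)) (hIle q hq)
          exact ⟨⟨hd0, le_trans (Nat.le_of_dvd hn0 hdn) hnle⟩, hdn⟩
      rw [hset]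
      exact aux_totient_ratio hn0
    · rw [if_neg h]
      exact mul_nonneg (by norm_num) (Finset.sum_nonneg hterm0)
  -- sums of indicators = counts
  have hA : ∀ p ∈ P, ∀ d ∈ D, ∑ q ∈ I, a p d q ≤ 2*(Q:ℝ)/((Nat.lcm p d : ℕ):ℝ) := by
    intro p hpP d hd
    have hp1 : 1 ≤ p := ((Finset.mem_filter.1 hpP).2.1).one_lt.le
    have hd1 : 1 ≤ d := (Finset.mem_Icc.1 hd).1
    have hm0 : 0 < Nat.lcm p d := Nat.pos_of_ne_zero (Nat.lcm_ne_zero (by omega) (by omega))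
    have hcount : ∑ q ∈ I, a p d q = ((I.filter (fun q => Nat.lcm p d ∣ q)).card : ℝ) := by
      rw [ha]
      dsimp only
      rw [Finset.sum_boole]
      norm_cast
      congr 1
      apply Finset.filter_congr
      intro q _
      simp [Nat.lcm_dvd_iff]
    rw [hcount, hI]
    exact aux_card Q (Nat.lcm p d) hm0
  -- Step C : per-prime bound
  have stepC : ∀ p ∈ P,
      ∑ q ∈ I, ∑ q' ∈ I, (if p ∣ q ∧ p ∣ q' then g q q' else 0)
      ≤ (24*(Q:ℝ)^2) * (1/(p:ℝ)^2) := by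
    intro p hpP
    have hpp : p.Prime := (Finset.mem_filter.1 hpP).2.1
    have hstep : ∑ q ∈ I, ∑ q' ∈ I, (if p ∣ q ∧ p ∣ q' then g q q' else 0)
        ≤ ∑ q ∈ I, ∑ q' ∈ I, (2 * ∑ d ∈ D, a p d q * a p d q' * (1/(d:ℝ))) := by
      apply Finset.sum_le_sum
      intro q hq
      apply Finset.sum_le_sum
      intro q' hq'
      exact stepB p hpP q hq q' hq'
    have hrearr : ∑ q ∈ I, ∑ q' ∈ I, (2 * ∑ d ∈ D, a p d q * a p d q' * (1/(d:ℝ)))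
        = 2 * ∑ d ∈ D, (∑ q ∈ I, a p d q) * (∑ q' ∈ I, a p d q') * (1/(d:ℝ)) := by
      have key : ∀ d, (∑ q ∈ I, a p d q) * (∑ q' ∈ I, a p d q') * (1/(d:ℝ))
          = ∑ q ∈ I, ∑ q' ∈ I, a p d q * a p d q' * (1/(d:ℝ)) := by
        intro d
        rw [Finset.sum_mul_sum, Finset.sum_mul]
        apply Finset.sum_congr rfl
        intro q _
        rw [Finset.sum_mul]
      simp only [key]
      simp only [← Finset.mul_sum]
      congr 1
      calc ∑ q ∈ I, ∑ q' ∈ I, ∑ d ∈ D, a p d q * a p d q' * (1/(d:ℝ))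
          = ∑ q ∈ I, ∑ d ∈ D, ∑ q' ∈ I, a p d q * a p d q' * (1/(d:ℝ)) :=
            Finset.sum_congr rfl (fun q _ => Finset.sum_comm)
        _ = ∑ d ∈ D, ∑ q ∈ I, ∑ q' ∈ I, a p d q * a p d q' * (1/(d:ℝ)) :=
            Finset.sum_comm
    have hABound : ∑ d ∈ D, (∑ q ∈ I, a p d q) * (∑ q' ∈ I, a p d q') * (1/(d:ℝ))
        ≤ (4*(Q:ℝ)^2) * (3/(p:ℝ)^2) := by
      have hptwise : ∀ d ∈ D, (∑ q ∈ I, a p d q) * (∑ q' ∈ I, a p d q') * (1/(d:ℝ))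
          ≤ (4*(Q:ℝ)^2) * (1/((d:ℝ) * ((Nat.lcm p d : ℕ):ℝ)^2)) := by
        intro d hd
        have hd1 : 1 ≤ d := (Finset.mem_Icc.1 hd).1
        have hp1 : 1 ≤ p := ((Finset.mem_filter.1 hpP).2.1).one_lt.le
        have hm0 : 0 < Nat.lcm p d := Nat.pos_of_ne_zero (Nat.lcm_ne_zero (by omega) (by omega))
        have hd0 : (0:ℝ) < (d:ℝ) := by exact_mod_cast hd1
        have hm0' : (0:ℝ) < ((Nat.lcm p d : ℕ):ℝ) := by exact_mod_cast hm0
        have hQ0 : (0:ℝ) < (Q:ℝ) := by exact_mod_cast (by omega : 0 < Q)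
        have hAn : (0:ℝ) ≤ ∑ q ∈ I, a p d q := Finset.sum_nonneg (fun q _ => ha0 p d q)
        have hAle := hA p hpP d hd
        have h1 : (∑ q ∈ I, a p d q) * (∑ q' ∈ I, a p d q')
            ≤ (2*(Q:ℝ)/((Nat.lcm p d : ℕ):ℝ))^2 := by
          rw [sq]
          exact mul_le_mul hAle hAle hAn (by positivity)
        have h2 : (2*(Q:ℝ)/((Nat.lcm p d : ℕ):ℝ))^2 * (1/(d:ℝ))
            = (4*(Q:ℝ)^2) * (1/((d:ℝ) * ((Nat.lcm p d : ℕ):ℝ)^2)) := by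
          field_simp
          ring
        calc (∑ q ∈ I, a p d q) * (∑ q' ∈ I, a p d q') * (1/(d:ℝ))
            ≤ (2*(Q:ℝ)/((Nat.lcm p d : ℕ):ℝ))^2 * (1/(d:ℝ)) := by
              apply mul_le_mul_of_nonneg_right h1 (by positivity)
          _ = (4*(Q:ℝ)^2) * (1/((d:ℝ) * ((Nat.lcm p d : ℕ):ℝ)^2)) := h2
      calc ∑ d ∈ D, (∑ q ∈ I, a p d q) * (∑ q' ∈ I, a p d q') * (1/(d:ℝ))
          ≤ ∑ d ∈ D, (4*(Q:ℝ)^2) * (1/((d:ℝ) * ((Nat.lcm p d : ℕ):ℝ)^2)) :=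
            Finset.sum_le_sum hptwise
        _ = (4*(Q:ℝ)^2) * ∑ d ∈ D, 1/((d:ℝ) * ((Nat.lcm p d : ℕ):ℝ)^2) := by
            rw [Finset.mul_sum]
        _ ≤ (4*(Q:ℝ)^2) * (3/(p:ℝ)^2) := by
            apply mul_le_mul_of_nonneg_left ?_ (by positivity)
            exact aux_T (2*Q) hpp
    calc ∑ q ∈ I, ∑ q' ∈ I, (if p ∣ q ∧ p ∣ q' then g q q' else 0)
        ≤ ∑ q ∈ I, ∑ q' ∈ I, (2 * ∑ d ∈ D, a p d q * a p d q' * (1/(d:ℝ))) := hstep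
      _ = 2 * ∑ d ∈ D, (∑ q ∈ I, a p d q) * (∑ q' ∈ I, a p d q') * (1/(d:ℝ)) := hrearr
      _ ≤ 2 * ((4*(Q:ℝ)^2) * (3/(p:ℝ)^2)) := by
          apply mul_le_mul_of_nonneg_left hABound (by norm_num)
      _ = (24*(Q:ℝ)^2) * (1/(p:ℝ)^2) := by ring
  -- final assembly
  calc ∑ q ∈ I, ∑ q' ∈ I,
        (if 1 < Nat.gcd (roughPart w q) (roughPart w q') then g q q' else 0)
      ≤ ∑ q ∈ I, ∑ q' ∈ I, ∑ p ∈ P, (if p ∣ q ∧ p ∣ q' then g q q' else 0) := by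
        apply Finset.sum_le_sum
        intro q hq
        apply Finset.sum_le_sum
        intro q' hq'
        exact stepA q hq q' hq'
    _ = ∑ q ∈ I, ∑ p ∈ P, ∑ q' ∈ I, (if p ∣ q ∧ p ∣ q' then g q q' else 0) :=
          Finset.sum_congr rfl (fun q _ => Finset.sum_comm)
    _ = ∑ p ∈ P, ∑ q ∈ I, ∑ q' ∈ I, (if p ∣ q ∧ p ∣ q' then g q q' else 0) :=
          Finset.sum_comm
    _ ≤ ∑ p ∈ P, (24*(Q:ℝ)^2) * (1/(p:ℝ)^2) := Finset.sum_le_sum stepC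
    _ = (24*(Q:ℝ)^2) * ∑ p ∈ P, 1/(p:ℝ)^2 := by rw [Finset.mul_sum]
    _ ≤ (24*(Q:ℝ)^2) * (6/(w * Real.log w)) := by
        apply mul_le_mul_of_nonneg_left ?_ (by positivity)
        exact aux_tail w hw (2*Q)
    _ = 144*(Q:ℝ)^2/(w * Real.log w) := by ring
    _ ≤ 200 * (Q:ℝ)^2 / (w * Real.log w) := by
        rw [div_le_div_iff₀ (by positivity) (by positivity)]
        nlinarith [sq_nonneg (Q:ℝ), mul_pos hw0 hlogw]
end
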